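/- Let 𝒞 be a category with pullbacks, I : 𝒞 ⥤ 𝒞 a functor, and η : 𝟭_𝒞 ⟶ I a natural transformation. Call a morphism f : X → Y formally étale if the η-naturality square at f (with sides f, η_X, η_Y, I f) is a pullback square. For an object X define T^∞X as the pullback of η_X : X → I X along itself, regarded as an object of the slice category Over X via the first projection π : T^∞X → X. Then for every formally étale morphism f : X → Y, the pullback along f of (T^∞Y, π) ∈ Over Y is isomorphic in Over X to (T^∞X, π); that is, X ×_Y T^∞Y ≅ T^∞X over X. -/

import Mathlib

open CategoryTheory CategoryTheory.Limits

/-- Pullback along a formally étale morphism preserves formal disk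
bundles: if the `η`-naturality square at `f : X ⟶ Y` is a pullback, then
`X ×_Y T^∞Y ≅ T^∞X` in `Over X`, where `T^∞X` is the pullback of `η_X` along itself
with its first projection. -/
theorem statement2 {C : Type*} [Category C] [HasPullbacks C]
    (I : C ⥤ C) (η : 𝟭 C ⟶ I)
    {X Y : C} (f : X ⟶ Y)
    (hf : IsPullback (η.app X) f (I.map f) (η.app Y)) :
    Nonempty ((Over.pullback f).obj (Over.mk (pullback.fst (η.app Y) (η.app Y)))
      ≅ Over.mk (pullback.fst (η.app X) (η.app X))) := by
  have hnat : f ≫ η.app Y = η.app X ≫ I.map f := η.naturality f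
  -- the induced map between formal disk bundles
  set g : pullback (η.app X) (η.app X) ⟶ pullback (η.app Y) (η.app Y) :=
    pullback.map (η.app X) (η.app X) (η.app Y) (η.app Y) f f (I.map f)
      hnat.symm hnat.symm with hg
  -- big rectangle : paste (T^∞X square).flip with hf.flip horizontally
  have hrect : IsPullback (pullback.snd (η.app X) (η.app X) ≫ f)
      (pullback.fst (η.app X) (η.app X)) (η.app Y) (η.app X ≫ I.map f) :=
    (IsPullback.of_hasPullback (η.app X) (η.app X)).flip.paste_horiz hf.flip
  have hright : IsPullback (pullback.snd (η.app Y) (η.app Y))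
      (pullback.fst (η.app Y) (η.app Y)) (η.app Y) (η.app Y) :=
    (IsPullback.of_hasPullback (η.app Y) (η.app Y)).flip
  have hcomm : g ≫ pullback.fst (η.app Y) (η.app Y)
      = pullback.fst (η.app X) (η.app X) ≫ f := by rw [hg]; exact pullback.lift_fst _ _ _
  have hleft : IsPullback g (pullback.fst (η.app X) (η.app X))
      (pullback.fst (η.app Y) (η.app Y)) f := by
    apply IsPullback.of_right _ hcomm hright
    have : g ≫ pullback.snd (η.app Y) (η.app Y)
        = pullback.snd (η.app X) (η.app X) ≫ f := by rw [hg]; exact pullback.lift_snd _ _ _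
    rw [this, hnat]
    exact hrect
  exact ⟨Over.isoMk hleft.isoPullback.symm (by simp)⟩
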